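/- Assume e i ≠ 0 for every i ∈ Fin n. Then for every a : Fin n → k, the map d_a := ∂ + μ_a satisfies d_a ∘ d_a = 0. -/

import Mathlib

open scoped Classical

/-- The Taylor differential over `k` on the free module `T = Finset (Fin n) →₀ k`
with basis `b_J`, determined by
`∂ b_J = ∑_{j ∈ J, e_{J \ {j}} = e_J} (-1)^{#{p ∈ J : p < j}} • b_{J \ {j}}`. -/
noncomputable def taylorD {n : ℕ} {σ : Type*} (e : Fin n → (σ →₀ ℕ))
    (k : Type*) [CommRing k] :
    (Finset (Fin n) →₀ k) →ₗ[k] (Finset (Fin n) →₀ k) :=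
  Finsupp.lsum k fun J => LinearMap.toSpanSingleton k _
    (∑ j ∈ J.filter (fun j => (J.erase j).sup e = J.sup e),
      ((-1 : k) ^ (J.filter (fun p => p < j)).card) • Finsupp.single (J.erase j) (1 : k))

/-- The multiplication map `μ_a` determined by
`μ_a b_J = ∑_{j ∉ J, e_j + e_J = e_{insert j J}} (-1)^{#{p ∈ J : p < j}} (a j) • b_{insert j J}`. -/
noncomputable def muMap {n : ℕ} {σ : Type*} (e : Fin n → (σ →₀ ℕ))
    (k : Type*) [CommRing k] (a : Fin n → k) :
    (Finset (Fin n) →₀ k) →ₗ[k] (Finset (Fin n) →₀ k) :=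
  Finsupp.lsum k fun J => LinearMap.toSpanSingleton k _
    (∑ j ∈ Finset.univ.filter
        (fun j : Fin n => j ∉ J ∧ e j + J.sup e = (insert j J).sup e),
      (((-1 : k) ^ (J.filter (fun p => p < j)).card) * a j) •
        Finsupp.single (insert j J) (1 : k))


namespace DAaux

variable {n : ℕ} {σ : Type*}

noncomputable def tog (J : Finset (Fin n)) (j : Fin n) : Finset (Fin n) :=
  if j ∈ J then J.erase j else insert j J

def cnd (e : Fin n → (σ →₀ ℕ)) (J : Finset (Fin n)) (j : Fin n) : Prop :=
  if j ∈ J then (J.erase j).sup e = J.sup e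
  else e j + J.sup e = (insert j J).sup e

noncomputable def coef (k : Type*) [CommRing k] (a : Fin n → k)
    (J : Finset (Fin n)) (j : Fin n) : k :=
  (-1 : k) ^ (J.filter (fun p => p < j)).card * (if j ∈ J then 1 else a j)

lemma tog_mem {J : Finset (Fin n)} {i j : Fin n} (hij : i ≠ j) :
    (i ∈ tog J j) ↔ i ∈ J := by
  unfold tog; split <;> simp [Finset.mem_erase, Finset.mem_insert, hij]

lemma tog_comm {J : Finset (Fin n)} {i j : Fin n} (hij : i ≠ j) :
    tog (tog J j) i = tog (tog J i) j := by
  apply Finset.ext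
  intro x
  by_cases hi : i ∈ J <;> by_cases hj : j ∈ J <;>
    simp [tog, tog_mem hij, tog_mem hij.symm, hi, hj, hij, hij.symm,
      Finset.mem_erase, Finset.mem_insert] <;> aesop


lemma diag (e : Fin n → (σ →₀ ℕ)) {J : Finset (Fin n)} {j : Fin n}
    (h1 : cnd e J j) (h2 : cnd e (tog J j) j) : e j = 0 := by
  by_cases hj : j ∈ J
  · simp only [cnd, tog, hj, if_true, if_neg (Finset.notMem_erase j J)] at h1 h2
    rw [Finset.insert_erase hj, ← h1, add_eq_right] at h2
    exact h2
  · simp only [cnd, tog, hj, if_false, if_pos (Finset.mem_insert_self j J)] at h1 h2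
    rw [Finset.erase_insert hj] at h2
    rw [← h2, add_eq_right] at h1
    exact h1

lemma nat_max (x y : ℕ) : x ⊔ y = max x y := rfl

lemma fwd (e : Fin n → (σ →₀ ℕ)) {J : Finset (Fin n)} {i j : Fin n} (hij : i ≠ j)
    (h1 : cnd e J j) (h2 : cnd e (tog J j) i) : cnd e J i ∧ cnd e (tog J i) j := by
  by_cases hi : i ∈ J <;> by_cases hj : j ∈ J
  · -- both in J
    simp only [cnd, tog, hi, hj, if_true,
      if_pos (show i ∈ J.erase j from Finset.mem_erase.mpr ⟨hij, hi⟩),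
      if_pos (show j ∈ J.erase i from Finset.mem_erase.mpr ⟨hij.symm, hj⟩)] at h1 h2 ⊢
    have hcomm : (J.erase j).erase i = (J.erase i).erase j := by
      ext x; simp [Finset.mem_erase]; tauto
    have key : ((J.erase i).erase j).sup e = J.sup e := by
      rw [← hcomm, h2, h1]
    have g1 : (J.erase i).sup e = J.sup e := by
      refine le_antisymm (Finset.sup_mono (Finset.erase_subset _ _)) ?_
      rw [← key]
      exact Finset.sup_mono (Finset.erase_subset _ _)
    exact ⟨g1, key.trans g1.symm⟩
  · -- i ∈ J, j ∉ J
    simp only [cnd, tog, hi, hj, if_true, if_false,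
      if_pos (show i ∈ insert j J from Finset.mem_insert_of_mem hi),
      if_neg (show j ∉ J.erase i from fun h => hj (Finset.mem_of_mem_erase h))] at h1 h2 ⊢
    rw [show (insert j J).erase i = insert j (J.erase i) from
      Finset.erase_insert_of_ne hij.symm] at h2
    simp only [Finset.sup_insert] at h1 h2 ⊢
    have ht : (J.erase i).sup e ≤ J.sup e := Finset.sup_mono (Finset.erase_subset _ _)
    have g1 : (J.erase i).sup e = J.sup e := by
      ext x
      have a1 := DFunLike.congr_fun h1 x
      have a2 := DFunLike.congr_fun h2 x
      have a3 := Finsupp.le_def.mp ht x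
      simp only [Finsupp.add_apply, Finsupp.sup_apply, nat_max, Nat.max_def] at a1 a2 ⊢
      split_ifs at a1 a2 ⊢ <;> omega
    refine ⟨g1, ?_⟩
    rw [g1]
    exact h1
  · -- i ∉ J, j ∈ J
    simp only [cnd, tog, hi, hj, if_true, if_false,
      if_neg (show i ∉ J.erase j from fun h => hi (Finset.mem_of_mem_erase h)),
      if_pos (show j ∈ insert i J from Finset.mem_insert_of_mem hj)] at h1 h2 ⊢
    rw [show (insert i J).erase j = insert i (J.erase j) from
      Finset.erase_insert_of_ne hij]
    simp only [Finset.sup_insert] at h2 ⊢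
    constructor
    · rw [← h1]; exact h2
    · rw [h1]
  · -- both out
    have hij' : i ∉ insert j J := by
      simp [Finset.mem_insert, hij, hi]
    have hji' : j ∉ insert i J := by
      simp [Finset.mem_insert, hij.symm, hj]
    simp only [cnd, tog, hi, hj, if_false, if_neg hij', if_neg hji'] at h1 h2 ⊢
    simp only [Finset.sup_insert] at h1 h2 ⊢
    constructor <;>
    · ext x
      have a1 := DFunLike.congr_fun h1 x
      have a2 := DFunLike.congr_fun h2 x
      simp only [Finsupp.add_apply, Finsupp.sup_apply, nat_max, Nat.max_def] at a1 a2 ⊢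
      split_ifs at a1 a2 ⊢ <;> omega


lemma card_filter_tog_of_lt {J : Finset (Fin n)} {i j : Fin n} (h : i < j) :
    ((tog J j).filter (fun p => p < i)).card = (J.filter (fun p => p < i)).card := by
  unfold tog; split
  · rw [Finset.filter_erase, Finset.erase_eq_of_notMem]
    simp [Finset.mem_filter, h.asymm]
  · rw [Finset.filter_insert, if_neg h.asymm]

lemma coef_anti_lt (k : Type*) [CommRing k] (a : Fin n → k) {J : Finset (Fin n)}
    {i j : Fin n} (h : i < j) :
    coef k a J j * coef k a (tog J j) i + coef k a J i * coef k a (tog J i) j = 0 := by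
  have hij : i ≠ j := h.ne
  unfold coef
  rw [card_filter_tog_of_lt h]
  simp only [tog_mem hij, tog_mem hij.symm]
  by_cases hi : i ∈ J
  · have B : ((tog J i).filter (fun p => p < j)).card + 1
        = (J.filter (fun p => p < j)).card := by
      unfold tog; rw [if_pos hi, Finset.filter_erase]
      exact Finset.card_erase_add_one (Finset.mem_filter.mpr ⟨hi, h⟩)
    rw [← B, pow_succ]
    ring
  · have B : ((tog J i).filter (fun p => p < j)).card
        = (J.filter (fun p => p < j)).card + 1 := by
      unfold tog; rw [if_neg hi, Finset.filter_insert, if_pos h]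
      exact Finset.card_insert_of_notMem (fun hmem => hi (Finset.mem_filter.mp hmem).1)
    rw [B, pow_succ]
    ring

lemma coef_anti (k : Type*) [CommRing k] (a : Fin n → k) {J : Finset (Fin n)}
    {i j : Fin n} (hij : i ≠ j) :
    coef k a J j * coef k a (tog J j) i + coef k a J i * coef k a (tog J i) j = 0 := by
  rcases hij.lt_or_gt with h | h
  · exact coef_anti_lt k a h
  · rw [add_comm]; exact coef_anti_lt k a h


lemma D_single (e : Fin n → (σ →₀ ℕ)) (k : Type*) [CommRing k] (a : Fin n → k)
    (J : Finset (Fin n)) :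
    (taylorD e k + muMap e k a) (Finsupp.single J (1:k)) =
      ∑ j : Fin n, if cnd e J j then coef k a J j • Finsupp.single (tog J j) (1:k) else 0 := by
  have h1 : (taylorD e k) (Finsupp.single J (1:k)) =
      ∑ j ∈ J.filter (fun j => (J.erase j).sup e = J.sup e),
        ((-1 : k) ^ (J.filter (fun p => p < j)).card) • Finsupp.single (J.erase j) (1 : k) := by
    simp [taylorD, Finsupp.lsum_single, LinearMap.toSpanSingleton_apply]
  have h2 : (muMap e k a) (Finsupp.single J (1:k)) =
      ∑ j ∈ Finset.univ.filter
        (fun j : Fin n => j ∉ J ∧ e j + J.sup e = (insert j J).sup e),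
      (((-1 : k) ^ (J.filter (fun p => p < j)).card) * a j) •
        Finsupp.single (insert j J) (1 : k) := by
    simp [muMap, Finsupp.lsum_single, LinearMap.toSpanSingleton_apply]
  have hsplit : ∀ j : Fin n,
      (if cnd e J j then coef k a J j • Finsupp.single (tog J j) (1:k) else 0) =
      (if j ∈ J then (if (J.erase j).sup e = J.sup e
        then ((-1:k) ^ (J.filter (fun p => p < j)).card) • Finsupp.single (J.erase j) (1:k)
        else 0) else 0)
      + (if j ∉ J ∧ e j + J.sup e = (insert j J).sup e
        then (((-1:k) ^ (J.filter (fun p => p < j)).card) * a j) •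
          Finsupp.single (insert j J) (1:k) else 0) := by
    intro j
    by_cases hj : j ∈ J <;> by_cases hc : cnd e J j <;>
      simp only [cnd, hj, if_true, if_false] at hc <;>
      simp [cnd, tog, coef, hj, hc]
  rw [LinearMap.add_apply, h1, h2, Finset.sum_filter, Finset.sum_filter]
  rw [show (∑ j ∈ J, if (J.erase j).sup e = J.sup e
        then ((-1:k) ^ (J.filter (fun p => p < j)).card) • Finsupp.single (J.erase j) (1:k)
        else 0)
      = ∑ j : Fin n, (if j ∈ J then (if (J.erase j).sup e = J.sup e
        then ((-1:k) ^ (J.filter (fun p => p < j)).card) • Finsupp.single (J.erase j) (1:k)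
        else 0) else 0) from by rw [Finset.sum_ite_mem, Finset.univ_inter]]
  rw [← Finset.sum_add_distrib]
  exact (Finset.sum_congr rfl fun j _ => hsplit j).symm


lemma G_diag_zero (e : Fin n → (σ →₀ ℕ)) (he : ∀ i : Fin n, e i ≠ 0)
    (k : Type*) [CommRing k] (a : Fin n → k) (J : Finset (Fin n)) (j : Fin n) :
    ((if cnd e J j ∧ cnd e (tog J j) j
        then coef k a J j * coef k a (tog J j) j else 0) •
      Finsupp.single (tog (tog J j) j) (1:k)) = 0 := by
  rw [if_neg (fun h => he j (diag e h.1 h.2)), zero_smul]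

lemma double_sum_zero (e : Fin n → (σ →₀ ℕ)) (he : ∀ i : Fin n, e i ≠ 0)
    (k : Type*) [CommRing k] (a : Fin n → k) (J : Finset (Fin n)) :
    ∑ p : Fin n × Fin n, ((if cnd e J p.1 ∧ cnd e (tog J p.1) p.2
        then coef k a J p.1 * coef k a (tog J p.1) p.2 else 0) •
      Finsupp.single (tog (tog J p.1) p.2) (1:k)) = 0 := by
  apply Finset.sum_ninvolution Prod.swap
  · rintro ⟨j, i⟩
    by_cases hij : i = j
    · subst hij
      simp only [Prod.swap_prod_mk]
      rw [G_diag_zero e he k a J i]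
      simp
    · simp only [Prod.swap_prod_mk]
      by_cases hc : cnd e J j ∧ cnd e (tog J j) i
      · obtain ⟨g1, g2⟩ := fwd e hij hc.1 hc.2
        rw [if_pos hc, if_pos ⟨g1, g2⟩,
          show tog (tog J i) j = tog (tog J j) i from (tog_comm hij).symm,
          ← add_smul, coef_anti k a hij, zero_smul]
      · have hc2 : ¬(cnd e J i ∧ cnd e (tog J i) j) := fun h =>
          hc (fwd e (Ne.symm hij) h.1 h.2)
        rw [if_neg hc, if_neg hc2, zero_smul, zero_smul, add_zero]
  · rintro ⟨j, i⟩ hne heq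
    simp only [Prod.swap_prod_mk, Prod.mk.injEq] at heq
    obtain ⟨h1, -⟩ := heq
    subst h1
    exact hne (G_diag_zero e he k a J i)
  · intro p; exact Finset.mem_univ _
  · intro p; exact Prod.swap_swap p

end DAaux

/-- If `e i ≠ 0` for every `i`, then for every `a : Fin n → k` the map
`d_a = ∂ + μ_a` squares to zero. -/
theorem dA_squared_eq_zero {n : ℕ} {σ : Type*} (e : Fin n → (σ →₀ ℕ))
    (k : Type*) [CommRing k] (he : ∀ i : Fin n, e i ≠ 0) (a : Fin n → k) :
    (taylorD e k + muMap e k a) ∘ₗ (taylorD e k + muMap e k a) = 0 := by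
  apply Finsupp.lhom_ext
  intro J b
  rw [LinearMap.comp_apply, LinearMap.zero_apply]
  have hb : (Finsupp.single J b) = b • Finsupp.single J (1:k) := by
    rw [Finsupp.smul_single, smul_eq_mul, mul_one]
  rw [hb, map_smul, map_smul]
  suffices hz : (taylorD e k + muMap e k a)
      ((taylorD e k + muMap e k a) (Finsupp.single J (1:k))) = 0 by
    rw [hz, smul_zero]
  rw [DAaux.D_single, map_sum]
  have hterm : ∀ j : Fin n,
      (taylorD e k + muMap e k a)
        (if DAaux.cnd e J j then DAaux.coef k a J j •
            Finsupp.single (DAaux.tog J j) (1:k) else 0)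
      = ∑ i : Fin n, ((if DAaux.cnd e J j ∧ DAaux.cnd e (DAaux.tog J j) i
            then DAaux.coef k a J j * DAaux.coef k a (DAaux.tog J j) i else 0) •
          Finsupp.single (DAaux.tog (DAaux.tog J j) i) (1:k)) := by
    intro j
    by_cases hc : DAaux.cnd e J j
    · rw [if_pos hc, map_smul, DAaux.D_single, Finset.smul_sum]
      refine Finset.sum_congr rfl fun i _ => ?_
      by_cases hc2 : DAaux.cnd e (DAaux.tog J j) i
      · rw [if_pos hc2, if_pos ⟨hc, hc2⟩, smul_smul]
      · rw [if_neg hc2, if_neg (fun h => hc2 h.2), smul_zero, zero_smul]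
    · rw [if_neg hc, map_zero]
      refine (Finset.sum_eq_zero fun i _ => ?_).symm
      rw [if_neg (fun h => hc h.1), zero_smul]
  rw [Finset.sum_congr rfl fun j _ => hterm j, ← Fintype.sum_prod_type']
  exact DAaux.double_sum_zero e he k a J
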